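/- Let X ⊆ ℝ^n and Y ⊆ ℝ^m be nonempty compact convex sets with Y of diameter at most D_y. Let F : X×Y → ℝ be continuous with F(x,·) concave on Y for each x ∈ X, and let d : X×Y → ℝ^{m̃} be continuous with each component d_i(x,·) convex on Y for each x ∈ X; assume that for every x ∈ X there exists y ∈ Y with d(x,y) ≤ 0 componentwise. Define f*(x) = max{F(x,y) : y ∈ Y, d(x,y) ≤ 0}, F_hi = max_{X×Y} F, f*_low = inf_{x∈X} f*(x), and L_y(x,y,λ;ρ) = F(x,y) − (‖[λ + ρ d(x,y)]_+‖² − ‖λ‖²)/(2ρ). Fix τ ∈ (0,1), ε₀ ∈ (0,1], and set ε_t = ε₀τ^t, ρ_t = ε_t^{-1}. Suppose λ⁰ ∈ ℝ^{m̃} with λ⁰ ≥ 0, and sequences (x^{t+1}, y^{t+1}) ∈ X×Y and λ^{t+1} = [λ^t + ρ_t d(x^{t+1},y^{t+1})]_+ for t ≥ 0 are such that for each t there exists u_t ∈ ℝ^m with ‖u_t‖ ≤ ε_t that is a supergradient of y ↦ L_y(x^{t+1},y,λ^t;ρ_t) at y^{t+1} on Y. Then for every k ≥ 0: ρ_k^{-1}‖λ^k‖²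 ≤ ‖λ⁰‖² + 2(F_hi − f*_low + D_y·ε₀)/(1−τ). -/

import Mathlib

/-- Componentwise positive part `[v]₊` of a vector. -/
noncomputable def posPart {k : ℕ} (v : EuclideanSpace ℝ (Fin k)) : EuclideanSpace ℝ (Fin k) :=
  WithLp.toLp 2 (fun i => max (v i) 0)

lemma norm_sq_mono_aux {k : ℕ} (v w : EuclideanSpace ℝ (Fin k))
    (h0 : ∀ i, 0 ≤ v i) (h : ∀ i, v i ≤ w i) : ‖v‖ ^ 2 ≤ ‖w‖ ^ 2 := by
  rw [PiLp.norm_sq_eq_of_L2, PiLp.norm_sq_eq_of_L2]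
  apply Finset.sum_le_sum
  intro i _
  have h1 : |v i| ≤ |w i| := by
    rw [abs_of_nonneg (h0 i), abs_of_nonneg ((h0 i).trans (h i))]; exact h i
  simpa [Real.norm_eq_abs, sq_abs] using pow_le_pow_left₀ (abs_nonneg _) h1 2

/-- Bound on the inner-constraint multipliers `λ^k` generated by the
first-order augmented Lagrangian method with penalty parameters `ρ_t = (ε₀τ^t)⁻¹`:
`ρ_k⁻¹‖λ^k‖² ≤ ‖λ⁰‖² + 2(F_hi − f*_low + D_y ε₀)/(1−τ)`. -/
theorem multiplier_growth_bound {n m mt : ℕ}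
    (X : Set (EuclideanSpace ℝ (Fin n))) (Y : Set (EuclideanSpace ℝ (Fin m)))
    (Dy : ℝ)
    (hXne : X.Nonempty) (hXcp : IsCompact X) (hXcv : Convex ℝ X)
    (hYne : Y.Nonempty) (hYcp : IsCompact Y) (hYcv : Convex ℝ Y)
    (hdY : ∀ u ∈ Y, ∀ v ∈ Y, ‖u - v‖ ≤ Dy)
    (F : EuclideanSpace ℝ (Fin n) → EuclideanSpace ℝ (Fin m) → ℝ)
    (hFcont : ContinuousOn
      (fun u : (EuclideanSpace ℝ (Fin n)) × (EuclideanSpace ℝ (Fin m)) => F u.1 u.2) (X ×ˢ Y))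
    (hFconc : ∀ x ∈ X, ConcaveOn ℝ Y (F x))
    (d : EuclideanSpace ℝ (Fin n) → EuclideanSpace ℝ (Fin m) → EuclideanSpace ℝ (Fin mt))
    (hdcont : ContinuousOn
      (fun u : (EuclideanSpace ℝ (Fin n)) × (EuclideanSpace ℝ (Fin m)) => d u.1 u.2) (X ×ˢ Y))
    (hdconv : ∀ x ∈ X, ∀ i, ConvexOn ℝ Y (fun y => d x y i))
    (hfeas : ∀ x ∈ X, ∃ y ∈ Y, ∀ i, d x y i ≤ 0)
    (τ ε0 : ℝ) (hτ0 : 0 < τ) (hτ1 : τ < 1) (hε0 : 0 < ε0) (hε01 : ε0 ≤ 1)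
    (x : ℕ → EuclideanSpace ℝ (Fin n)) (y : ℕ → EuclideanSpace ℝ (Fin m))
    (lam : ℕ → EuclideanSpace ℝ (Fin mt))
    (hmem : ∀ t : ℕ, x (t+1) ∈ X ∧ y (t+1) ∈ Y)
    (hlam0 : ∀ i, 0 ≤ lam 0 i)
    -- λ^{t+1} = [λ^t + ρ_t d(x^{t+1}, y^{t+1})]₊ with ρ_t = (ε₀ τ^t)⁻¹
    (hrec : ∀ t : ℕ, lam (t+1) = posPart (lam t + (ε0 * τ ^ t)⁻¹ • d (x (t+1)) (y (t+1))))
    -- at each t there is a supergradient u_t, ‖u_t‖ ≤ ε_t = ε₀τ^t, of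
    -- y ↦ L_y(x^{t+1}, y, λ^t; ρ_t) at y^{t+1} on Y
    (hsuper : ∀ t : ℕ, ∃ u : EuclideanSpace ℝ (Fin m), ‖u‖ ≤ ε0 * τ ^ t ∧ ∀ y' ∈ Y,
      F (x (t+1)) y'
          - (‖posPart (lam t + (ε0 * τ ^ t)⁻¹ • d (x (t+1)) y')‖ ^ 2 - ‖lam t‖ ^ 2)
            / (2 * (ε0 * τ ^ t)⁻¹)
        ≤ F (x (t+1)) (y (t+1))
          - (‖posPart (lam t + (ε0 * τ ^ t)⁻¹ • d (x (t+1)) (y (t+1)))‖ ^ 2 - ‖lam t‖ ^ 2)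
            / (2 * (ε0 * τ ^ t)⁻¹)
          + @inner ℝ _ _ u (y' - y (t+1))) :
    ∀ k : ℕ, (ε0 * τ ^ k) * ‖lam k‖ ^ 2
      ≤ ‖lam 0‖ ^ 2
        + 2 * (sSup ((fun u : (EuclideanSpace ℝ (Fin n)) × (EuclideanSpace ℝ (Fin m)) =>
              F u.1 u.2) '' (X ×ˢ Y))
            - sInf ((fun x' => sSup ((fun y' => F x' y') '' {y' ∈ Y | ∀ i, d x' y' i ≤ 0})) '' X)
            + Dy * ε0) / (1 - τ) := by
  -- abbreviations
  set FHi : ℝ := sSup ((fun u : (EuclideanSpace ℝ (Fin n)) × (EuclideanSpace ℝ (Fin m)) =>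
      F u.1 u.2) '' (X ×ˢ Y)) with hFHi_def
  set fstar : EuclideanSpace ℝ (Fin n) → ℝ :=
    fun x' => sSup ((fun y' => F x' y') '' {y' ∈ Y | ∀ i, d x' y' i ≤ 0}) with hfstar_def
  set flow : ℝ := sInf (fstar '' X) with hflow_def
  set C : ℝ := FHi - flow + Dy * ε0 with hC_def
  have hDy : 0 ≤ Dy := by
    obtain ⟨y0, hy0⟩ := hYne
    simpa using hdY y0 hy0 y0 hy0
  -- compactness of the image of F
  have hFimcp : IsCompact ((fun u : (EuclideanSpace ℝ (Fin n)) × (EuclideanSpace ℝ (Fin m)) =>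
      F u.1 u.2) '' (X ×ˢ Y)) := (hXcp.prod hYcp).image_of_continuousOn hFcont
  have hFle : ∀ x' ∈ X, ∀ y' ∈ Y, F x' y' ≤ FHi := by
    intro x' hx' y' hy'
    exact le_csSup hFimcp.bddAbove ⟨(x', y'), ⟨hx', hy'⟩, rfl⟩
  have hFge : ∀ x' ∈ X, ∀ y' ∈ Y, sInf ((fun u : (EuclideanSpace ℝ (Fin n)) ×
      (EuclideanSpace ℝ (Fin m)) => F u.1 u.2) '' (X ×ˢ Y)) ≤ F x' y' := by
    intro x' hx' y' hy'
    exact csInf_le hFimcp.bddBelow ⟨(x', y'), ⟨hx', hy'⟩, rfl⟩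
  -- feasible-set machinery
  have hfeasm : ∀ x' ∈ X, ∃ yh ∈ {y' ∈ Y | ∀ i, d x' y' i ≤ 0},
      fstar x' = F x' yh ∧ ∀ y'' ∈ {y' ∈ Y | ∀ i, d x' y' i ≤ 0}, F x' y'' ≤ F x' yh := by
    intro x' hx'
    have hdx : ContinuousOn (fun y' => d x' y') Y := by
      have hc : Continuous (fun y' : EuclideanSpace ℝ (Fin m) => (x', y')) :=
        continuous_const.prodMk continuous_id
      exact hdcont.comp hc.continuousOn (fun y' hy' => Set.mk_mem_prod hx' hy')
    have hFx : ContinuousOn (fun y' => F x' y') Y := by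
      have hc : Continuous (fun y' : EuclideanSpace ℝ (Fin m) => (x', y')) :=
        continuous_const.prodMk continuous_id
      exact hFcont.comp hc.continuousOn (fun y' hy' => Set.mk_mem_prod hx' hy')
    have hCclosed : IsClosed {v : EuclideanSpace ℝ (Fin mt) | ∀ i, v i ≤ 0} := by
      have : {v : EuclideanSpace ℝ (Fin mt) | ∀ i, v i ≤ 0} = ⋂ i, {v | v i ≤ 0} := by
        ext v; simp [Set.mem_iInter]
      rw [this]
      exact isClosed_iInter fun i =>
        isClosed_le (EuclideanSpace.proj (𝕜 := ℝ) i).continuous continuous_const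
    have hset : {y' ∈ Y | ∀ i, d x' y' i ≤ 0}
        = Y ∩ (fun y' => d x' y') ⁻¹' {v | ∀ i, v i ≤ 0} := rfl
    have hclosed : IsClosed {y' ∈ Y | ∀ i, d x' y' i ≤ 0} := by
      rw [hset]
      exact hdx.preimage_isClosed_of_isClosed hYcp.isClosed hCclosed
    have hcp : IsCompact {y' ∈ Y | ∀ i, d x' y' i ≤ 0} :=
      hYcp.of_isClosed_subset hclosed (Set.sep_subset _ _)
    have hne : {y' ∈ Y | ∀ i, d x' y' i ≤ 0}.Nonempty := by
      obtain ⟨y0, hy0, hd0⟩ := hfeas x' hx'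
      exact ⟨y0, hy0, hd0⟩
    obtain ⟨yh, hyh, heq, hge⟩ := hcp.exists_sSup_image_eq_and_ge hne
      (hFx.mono (Set.sep_subset _ _))
    exact ⟨yh, hyh, heq, hge⟩
  -- lower bound of fstar and bounds on flow
  have hfstar_mem : ∀ x' ∈ X, sInf ((fun u : (EuclideanSpace ℝ (Fin n)) ×
      (EuclideanSpace ℝ (Fin m)) => F u.1 u.2) '' (X ×ˢ Y)) ≤ fstar x' ∧ fstar x' ≤ FHi := by
    intro x' hx'
    obtain ⟨yh, hyh, heq, _⟩ := hfeasm x' hx'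
    constructor
    · rw [heq]; exact hFge x' hx' yh hyh.1
    · rw [heq]; exact hFle x' hx' yh hyh.1
  have hflow_bdd : BddBelow (fstar '' X) := by
    refine ⟨sInf ((fun u : (EuclideanSpace ℝ (Fin n)) × (EuclideanSpace ℝ (Fin m)) =>
      F u.1 u.2) '' (X ×ˢ Y)), ?_⟩
    rintro v ⟨x', hx', rfl⟩
    exact (hfstar_mem x' hx').1
  have hflow_le : ∀ x' ∈ X, flow ≤ fstar x' := by
    intro x' hx'
    exact csInf_le hflow_bdd ⟨x', hx', rfl⟩
  have hC : 0 ≤ C := by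
    obtain ⟨x0, hx0⟩ := hXne
    have h1 := hflow_le x0 hx0
    have h2 := (hfstar_mem x0 hx0).2
    have : flow ≤ FHi := h1.trans h2
    have : 0 ≤ Dy * ε0 := mul_nonneg hDy hε0.le
    rw [hC_def]; linarith
  -- nonnegativity of multipliers
  have hlampos : ∀ t i, 0 ≤ lam t i := by
    intro t
    induction t with
    | zero => exact hlam0
    | succ t ih =>
      rw [hrec t]
      intro i
      simp only [_root_.posPart, PiLp.toLp_apply]
      exact le_max_right _ _
  -- per-step estimate
  have step : ∀ t : ℕ, ‖lam (t+1)‖ ^ 2 ≤ ‖lam t‖ ^ 2 + 2 * (ε0 * τ ^ t)⁻¹ * C := by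
    intro t
    obtain ⟨u, hu, hsg⟩ := hsuper t
    obtain ⟨hxm, hym⟩ := hmem t
    have hε : 0 < ε0 * τ ^ t := mul_pos hε0 (pow_pos hτ0 t)
    have hρ : 0 < (ε0 * τ ^ t)⁻¹ := inv_pos.2 hε
    have hr : 0 < 2 * (ε0 * τ ^ t)⁻¹ := by linarith
    obtain ⟨yh, hyh, heq, _⟩ := hfeasm (x (t+1)) hxm
    have key := hsg yh hyh.1
    rw [← hrec t] at key
    -- drop the [λ + ρ d(x, yh)]₊ term
    have hAL : ‖posPart (lam t + (ε0 * τ ^ t)⁻¹ • d (x (t+1)) yh)‖ ^ 2 ≤ ‖lam t‖ ^ 2 := by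
      apply norm_sq_mono_aux
      · intro i; simp only [_root_.posPart, PiLp.toLp_apply]; exact le_max_right _ _
      · intro i
        have hd : d (x (t+1)) yh i ≤ 0 := hyh.2 i
        have : (ε0 * τ ^ t)⁻¹ * d (x (t+1)) yh i ≤ 0 :=
          mul_nonpos_of_nonneg_of_nonpos hρ.le hd
        have h1 : lam t i + (ε0 * τ ^ t)⁻¹ * d (x (t+1)) yh i ≤ lam t i := by linarith
        have h2 : (lam t + (ε0 * τ ^ t)⁻¹ • d (x (t+1)) yh) i
            = lam t i + (ε0 * τ ^ t)⁻¹ * d (x (t+1)) yh i := rfl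
        simp only [_root_.posPart, PiLp.toLp_apply, h2]
        exact max_le h1 (hlampos t i)
    -- bound the inner product
    have hip : @inner ℝ _ _ u (yh - y (t+1)) ≤ Dy * ε0 := by
      calc @inner ℝ _ _ u (yh - y (t+1)) ≤ ‖u‖ * ‖yh - y (t+1)‖ := real_inner_le_norm _ _
        _ ≤ (ε0 * τ ^ t) * Dy := by
            apply mul_le_mul hu (hdY yh hyh.1 (y (t+1)) hym) (norm_nonneg _) hε.le
        _ ≤ Dy * ε0 := by
            have hτt : τ ^ t ≤ 1 := pow_le_one₀ hτ0.le hτ1.le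
            nlinarith [mul_le_mul_of_nonneg_right
              (mul_le_mul_of_nonneg_left hτt hε0.le) hDy]
    have hF1 : F (x (t+1)) (y (t+1)) ≤ FHi := hFle _ hxm _ hym
    have hF2 : flow ≤ F (x (t+1)) yh := by
      have := hflow_le (x (t+1)) hxm
      rw [heq] at this; exact this
    -- rearrange
    have h1 : (‖lam (t+1)‖ ^ 2 - ‖lam t‖ ^ 2) / (2 * (ε0 * τ ^ t)⁻¹) ≤ C := by
      have hA : (‖posPart (lam t + (ε0 * τ ^ t)⁻¹ • d (x (t+1)) yh)‖ ^ 2 - ‖lam t‖ ^ 2)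
          / (2 * (ε0 * τ ^ t)⁻¹) ≤ 0 :=
        div_nonpos_of_nonpos_of_nonneg (by linarith) hr.le
      rw [hC_def]
      linarith
    have h2 := (div_le_iff₀ hr).1 h1
    nlinarith [mul_comm C (2 * (ε0 * τ ^ t)⁻¹)]
  -- geometric sum identity
  have hsum : ∀ k : ℕ, τ * (∑ j ∈ Finset.range k, τ ^ (j+1)) + τ
      = ∑ j ∈ Finset.range (k+1), τ ^ (j+1) := by
    intro k
    rw [Finset.sum_range_succ', Finset.mul_sum]
    simp [pow_succ, mul_comm]
  -- main induction
  have main : ∀ k : ℕ, ε0 * τ ^ k * ‖lam k‖ ^ 2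
      ≤ ε0 * τ ^ k * ‖lam 0‖ ^ 2 + 2 * C * (∑ j ∈ Finset.range k, τ ^ (j+1)) := by
    intro k
    induction k with
    | zero => simp
    | succ k ih =>
      have hεk : 0 < ε0 * τ ^ k := mul_pos hε0 (pow_pos hτ0 k)
      have h2 : ε0 * τ ^ k * ‖lam (k+1)‖ ^ 2 ≤ ε0 * τ ^ k * ‖lam k‖ ^ 2 + 2 * C := by
        calc ε0 * τ ^ k * ‖lam (k+1)‖ ^ 2
            ≤ ε0 * τ ^ k * (‖lam k‖ ^ 2 + 2 * (ε0 * τ ^ k)⁻¹ * C) :=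
              mul_le_mul_of_nonneg_left (step k) hεk.le
          _ = ε0 * τ ^ k * ‖lam k‖ ^ 2 + 2 * C := by
              field_simp
      calc ε0 * τ ^ (k+1) * ‖lam (k+1)‖ ^ 2
          = τ * (ε0 * τ ^ k * ‖lam (k+1)‖ ^ 2) := by ring
        _ ≤ τ * ((ε0 * τ ^ k * ‖lam 0‖ ^ 2 + 2 * C * (∑ j ∈ Finset.range k, τ ^ (j+1)))
              + 2 * C) := by
            apply mul_le_mul_of_nonneg_left _ hτ0.le
            linarith
        _ = ε0 * τ ^ (k+1) * ‖lam 0‖ ^ 2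
            + 2 * C * (τ * (∑ j ∈ Finset.range k, τ ^ (j+1)) + τ) := by ring
        _ = ε0 * τ ^ (k+1) * ‖lam 0‖ ^ 2
            + 2 * C * (∑ j ∈ Finset.range (k+1), τ ^ (j+1)) := by rw [hsum k]
  -- conclude
  intro k
  have h1τ : 0 < 1 - τ := by linarith
  have hεk1 : ε0 * τ ^ k ≤ 1 := by
    have hτt : τ ^ k ≤ 1 := pow_le_one₀ hτ0.le hτ1.le
    nlinarith [pow_pos hτ0 k]
  have hlhs : ε0 * τ ^ k * ‖lam 0‖ ^ 2 ≤ ‖lam 0‖ ^ 2 :=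
    mul_le_of_le_one_left (sq_nonneg _) hεk1
  have hSk : (∑ j ∈ Finset.range k, τ ^ (j+1)) ≤ 1 / (1 - τ) := by
    have hgs : (∑ j ∈ Finset.range k, τ ^ j) = (1 - τ ^ k) / (1 - τ) := by
      rw [geom_sum_eq (by linarith : τ ≠ 1) k]
      rw [div_eq_div_iff (by linarith) (by linarith : (1:ℝ) - τ ≠ 0)]
      ring
    have h1 : (∑ j ∈ Finset.range k, τ ^ (j+1)) ≤ (∑ j ∈ Finset.range k, τ ^ j) := by
      apply Finset.sum_le_sum
      intro j _
      calc τ ^ (j+1) = τ ^ j * τ := by ring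
        _ ≤ τ ^ j * 1 := by
            apply mul_le_mul_of_nonneg_left hτ1.le (pow_nonneg hτ0.le j)
        _ = τ ^ j := by ring
    rw [hgs] at h1
    have h2 : (1 - τ ^ k) / (1 - τ) ≤ 1 / (1 - τ) := by
      gcongr
      nlinarith [pow_pos hτ0 k]
    linarith
  have h3 : 2 * C * (∑ j ∈ Finset.range k, τ ^ (j+1)) ≤ 2 * C / (1 - τ) := by
    calc 2 * C * (∑ j ∈ Finset.range k, τ ^ (j+1)) ≤ 2 * C * (1 / (1 - τ)) := by
          apply mul_le_mul_of_nonneg_left hSk (by linarith)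
      _ = 2 * C / (1 - τ) := by ring
  have hmain := main k
  rw [hC_def] at hmain h3
  linarith
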